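/- For every integer n ≥ 2 and every α ∈ ℂ, the (n+1)-dimensional n-ary Filippov algebra C₂(α) degenerates to B; that is, the structure of B lies in the closure of the GL(V)-orbit of the structure of C₂(α). -/

import Mathlib

open Function Submodule

/-! Common framework: `V = ℂ^{n+1}`, `n`-ary multiplications as functions
`(Fin n → V) → V`, the action of `GL(V)` on them, orbits, and the
(n+1)-dimensional n-ary Filippov algebras of Kaygorodov–Volkov, each described
as an alternating `n`-linear map by its values on the increasing tuples of
distinct standard basis vectors (0-indexed: `bt n j` is the tuple omitting `e j`). -/

/-- The underlying space `V = ℂ^{n+1}`. -/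
abbrev nV (n : ℕ) : Type := Fin (n + 1) → ℂ

/-- The `j`-th standard basis vector of `V` (0-indexed). -/
def sb (n : ℕ) (j : Fin (n + 1)) : nV n := Pi.single j 1

/-- The increasing `n`-tuple of standard basis vectors omitting `e j`. -/
def bt (n : ℕ) (j : Fin (n + 1)) : Fin n → nV n := fun k => sb n (j.succAbove k)

/-- The action of `GL(V)` (invertible linear maps) on `n`-ary multiplications:
`(g • μ)(x₁, …, xₙ) = g (μ (g⁻¹ x₁, …, g⁻¹ xₙ))`. -/
noncomputable def glAct (n : ℕ) (g : nV n ≃ₗ[ℂ] nV n) (μ : (Fin n → nV n) → nV n) :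
    (Fin n → nV n) → nV n :=
  fun x => g (μ fun i => g.symm (x i))

/-- The `GL(V)`-orbit of an `n`-ary multiplication. -/
def glOrbit (n : ℕ) (μ : (Fin n → nV n) → nV n) : Set ((Fin n → nV n) → nV n) :=
  {ν | ∃ g : nV n ≃ₗ[ℂ] nV n, ν = glAct n g μ}

/-- The algebra `B`: `[e₂, …, e_{n+1}] = e₁` (0-indexed: the tuple omitting `e 0`
maps to `e 0`), all other increasing basis products zero. -/
def IsB (n : ℕ) (μ : AlternatingMap ℂ (nV n) (nV n) (Fin n)) : Prop :=
  μ (bt n 0) = sb n 0 ∧ ∀ j : Fin (n + 1), j ≠ 0 → μ (bt n j) = 0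

/-- The algebra `C₁`: `[e₂, …, e_{n+1}] = e₁`, `[e₁, e₃, …, e_{n+1}] = e₂`. -/
def IsC1 (n : ℕ) (μ : AlternatingMap ℂ (nV n) (nV n) (Fin n)) : Prop :=
  μ (bt n 0) = sb n 0 ∧ μ (bt n 1) = sb n 1 ∧
    ∀ j : Fin (n + 1), j ≠ 0 → j ≠ 1 → μ (bt n j) = 0

/-- The algebra `C₂(α)`: `[e₂, …, e_{n+1}] = α e₁ + e₂`, `[e₁, e₃, …, e_{n+1}] = e₂`. -/
def IsC2 (n : ℕ) (α : ℂ) (μ : AlternatingMap ℂ (nV n) (nV n) (Fin n)) : Prop :=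
  μ (bt n 0) = α • sb n 0 + sb n 1 ∧ μ (bt n 1) = sb n 1 ∧
    ∀ j : Fin (n + 1), j ≠ 0 → j ≠ 1 → μ (bt n j) = 0

/-- The algebra `C₃`: `[e₁, e₃, …, e_{n+1}] = e₁`, `[e₂, e₃, …, e_{n+1}] = e₂`. -/
def IsC3 (n : ℕ) (μ : AlternatingMap ℂ (nV n) (nV n) (Fin n)) : Prop :=
  μ (bt n 1) = sb n 0 ∧ μ (bt n 0) = sb n 1 ∧
    ∀ j : Fin (n + 1), j ≠ 0 → j ≠ 1 → μ (bt n j) = 0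

/-- The algebra `D_r`: `[e₁, …, e_{i-1}, e_{i+1}, …, e_{n+1}] = e_i` for `1 ≤ i ≤ r`
(0-indexed: the tuple omitting `e j` maps to `e j` for `j < r` and to `0` otherwise). -/
def IsD (n r : ℕ) (μ : AlternatingMap ℂ (nV n) (nV n) (Fin n)) : Prop :=
  ∀ j : Fin (n + 1), ((j : ℕ) < r → μ (bt n j) = sb n j) ∧ (r ≤ (j : ℕ) → μ (bt n j) = 0)

/-! Auxiliary lemmas -/

lemma my_alt_ext {n : ℕ} {f g : AlternatingMap ℂ (nV n) (nV n) (Fin n)}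
    (h : ∀ j, f (bt n j) = g (bt n j)) : f = g := by
  classical
  apply Module.Basis.ext_alternating (Pi.basisFun ℂ (Fin (n+1)))
  intro v hv
  obtain ⟨j, hj⟩ : ∃ j, ∀ k, v k ≠ j := by
    by_contra hc
    push_neg at hc
    have hs : Surjective v := fun j => by obtain ⟨k, hk⟩ := hc j; exact ⟨k, hk⟩
    have := Fintype.card_le_of_surjective v hs
    simp at this
  choose p hp using fun k => Fin.exists_succAbove_eq (hj k)
  have hpinj : Injective p := fun a b hab => hv (by rw [← hp a, ← hp b, hab])
  have hpbij : Bijective p := Finite.injective_iff_bijective.mp hpinj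
  let pe := Equiv.ofBijective p hpbij
  have key : (fun i => (Pi.basisFun ℂ (Fin (n+1))) (v i)) = bt n j ∘ pe := by
    funext k
    simp [bt, sb, pe, Equiv.ofBijective, hp k]
  rw [key, f.map_perm, g.map_perm, h j]

def L3 (n : ℕ) (a b c : ℂ) : nV n →ₗ[ℂ] nV n where
  toFun x := fun i => if i = 0 then a * x 1 else if i = 1 then b * x 0 else c * x i
  map_add' x y := by
    funext i; simp only [Pi.add_apply]; split_ifs <;> ring
  map_smul' r x := by
    funext i; simp only [Pi.smul_apply, smul_eq_mul, RingHom.id_apply]; split_ifs <;> ring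

lemma L3_single (m : ℕ) (a b c : ℂ) (i : Fin (m+2+1)) :
    L3 (m+2) a b c (sb (m+2) i) =
      if i = 0 then b • sb (m+2) 1 else if i = 1 then a • sb (m+2) 0 else c • sb (m+2) i := by
  have h01 : (0 : Fin (m+2+1)) ≠ 1 := by simp [Fin.ext_iff]
  funext j
  rcases eq_or_ne i 0 with rfl | hi0
  · rcases eq_or_ne j 0 with rfl | hj0
    · simp [L3, sb, h01, Pi.single_eq_of_ne h01]
    · rcases eq_or_ne j 1 with rfl | hj1
      · simp [L3, sb, h01.symm, hj0]
      · simp [L3, sb, hj0, hj1, Pi.single_eq_of_ne hj1, Pi.single_eq_of_ne hj0]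
  rcases eq_or_ne i 1 with rfl | hi1
  · rcases eq_or_ne j 0 with rfl | hj0
    · simp [L3, sb, h01, hi0]
    · rcases eq_or_ne j 1 with rfl | hj1
      · simp [L3, sb, hi0, h01, Pi.single_eq_of_ne h01]
      · simp [L3, sb, hj0, hj1, Pi.single_eq_of_ne hj1, Pi.single_eq_of_ne hj0]
  · rcases eq_or_ne j 0 with rfl | hj0
    · simp [L3, sb, hi0, hi1, Pi.single_eq_of_ne (Ne.symm hi1)]
    · rcases eq_or_ne j 1 with rfl | hj1
      · simp [L3, sb, hi0, hi1, Pi.single_eq_of_ne (Ne.symm hi0)]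
      · simp [L3, sb, hi0, hi1, hj0, hj1]

lemma succAbove_coe {n : ℕ} (p : Fin (n+1)) (i : Fin n) :
    ((p.succAbove i : Fin (n+1)) : ℕ) = if (i:ℕ) < (p:ℕ) then (i:ℕ) else (i:ℕ)+1 := by
  rw [Fin.succAbove]
  split_ifs with h1 h2 h3 <;>
    simp_all [Fin.lt_def, Fin.coe_castSucc, Fin.val_succ]

noncomputable def Geq (m : ℕ) (t : ℂ) (ht : t ≠ 0) : nV (m+2) ≃ₗ[ℂ] nV (m+2) :=
  LinearEquiv.ofLinear (L3 (m+2) (t⁻¹^(m+2)) t⁻¹ t⁻¹) (L3 (m+2) t (t^(m+2)) t)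
    (by
      have h10 : (1 : Fin (m+2+1)) ≠ 0 := by simp [Fin.ext_iff]
      apply LinearMap.ext; intro x; funext i
      simp only [LinearMap.comp_apply, LinearMap.id_apply, L3, LinearMap.coe_mk, AddHom.coe_mk]
      simp only [h10, if_false, if_pos rfl, if_neg h10]
      rcases eq_or_ne i 0 with rfl | hi0
      · rw [if_pos rfl]; simp only [↓reduceIte, if_neg h10.symm]; rw [← mul_assoc, ← mul_pow, inv_mul_cancel₀ ht, one_pow, one_mul]
      rcases eq_or_ne i 1 with rfl | hi1
      · rw [if_neg h10, if_pos rfl]; simp only [↓reduceIte, if_neg h10.symm]; field_simp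
      · rw [if_neg hi0, if_neg hi1, if_neg hi0, if_neg hi1]; field_simp)
    (by
      have h10 : (1 : Fin (m+2+1)) ≠ 0 := by simp [Fin.ext_iff]
      apply LinearMap.ext; intro x; funext i
      simp only [LinearMap.comp_apply, LinearMap.id_apply, L3, LinearMap.coe_mk, AddHom.coe_mk]
      simp only [h10, if_false, if_pos rfl, if_neg h10]
      rcases eq_or_ne i 0 with rfl | hi0
      · rw [if_pos rfl]; simp only [↓reduceIte, if_neg h10.symm]; field_simp
      rcases eq_or_ne i 1 with rfl | hi1
      · rw [if_neg h10, if_pos rfl]; simp only [↓reduceIte, if_neg h10.symm]; rw [← mul_assoc, ← mul_pow, mul_inv_cancel₀ ht, one_pow, one_mul]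
      · rw [if_neg hi0, if_neg hi1, if_neg hi0, if_neg hi1]; field_simp)

lemma sA {m : ℕ} (p : Fin (m+3)) (k : Fin (m+2)) (r : Fin (m+3))
    (h : (if (k:ℕ) < (p:ℕ) then (k:ℕ) else (k:ℕ)+1) = (r:ℕ)) : p.succAbove k = r := by
  rw [Fin.ext_iff, succAbove_coe, h]

lemma sA_ne {m : ℕ} (p : Fin (m+3)) (k : Fin (m+2)) (r : Fin (m+3))
    (h : (if (k:ℕ) < (p:ℕ) then (k:ℕ) else (k:ℕ)+1) ≠ (r:ℕ)) : p.succAbove k ≠ r := by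
  rw [ne_eq, Fin.ext_iff, succAbove_coe]; exact h

/-- The three tuple computations for `h = L3 t (t^(m+2)) t`. -/
lemma key0 (m : ℕ) (t : ℂ) :
    (fun k => L3 (m+2) t (t^(m+2)) t (bt (m+2) 0 k)) = fun k => t • bt (m+2) 1 k := by
  funext k
  simp only [bt]
  rw [L3_single]
  rcases eq_or_ne k 0 with rfl | hk
  · rw [sA 0 0 1 (by simp only [Fin.val_zero, Fin.val_one]; split_ifs <;> simp_all <;> omega),
      sA 1 0 0 (by simp only [Fin.val_zero, Fin.val_one]; split_ifs <;> simp_all <;> omega)]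
    have h10 : (1 : Fin (m+2+1)) ≠ 0 := by simp [Fin.ext_iff]
    rw [if_neg h10, if_pos rfl]
  · have hkv : (k:ℕ) ≠ 0 := fun h => hk (Fin.ext h)
    rw [sA 0 k k.succ (by simp only [Fin.val_zero, Fin.val_succ]; split_ifs <;> simp_all <;> omega),
      sA 1 k k.succ (by simp only [Fin.val_one, Fin.val_succ]; split_ifs <;> simp_all <;> omega),
      if_neg (Fin.succ_ne_zero k),
      if_neg (show (k.succ : Fin (m+2+1)) ≠ 1 by
        simp only [ne_eq, Fin.ext_iff, Fin.val_succ, Fin.val_one]; omega)]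

lemma key1 (m : ℕ) (t : ℂ) :
    (fun k => L3 (m+2) t (t^(m+2)) t (bt (m+2) 1 k)) =
      fun k => (if k = 0 then t^(m+2) else t) • bt (m+2) 0 k := by
  funext k
  simp only [bt]
  rw [L3_single]
  rcases eq_or_ne k 0 with rfl | hk
  · rw [sA 1 0 0 (by simp only [Fin.val_zero, Fin.val_one]; split_ifs <;> simp_all <;> omega),
      sA 0 0 1 (by simp only [Fin.val_zero, Fin.val_one]; split_ifs <;> simp_all <;> omega),
      if_pos rfl, if_pos rfl]
  · have hkv : (k:ℕ) ≠ 0 := fun h => hk (Fin.ext h)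
    rw [sA 1 k k.succ (by simp only [Fin.val_one, Fin.val_succ]; split_ifs <;> simp_all <;> omega),
      sA 0 k k.succ (by simp only [Fin.val_zero, Fin.val_succ]; split_ifs <;> simp_all <;> omega),
      if_neg (Fin.succ_ne_zero k),
      if_neg (show (k.succ : Fin (m+2+1)) ≠ 1 by
        simp only [ne_eq, Fin.ext_iff, Fin.val_succ, Fin.val_one]; omega),
      if_neg hk]

lemma key2 (m : ℕ) (t : ℂ) (j : Fin (m+2+1)) (hj0 : j ≠ 0) (hj1 : j ≠ 1) :
    (fun k => L3 (m+2) t (t^(m+2)) t (bt (m+2) j k)) =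
      fun k => (if k = 0 then t^(m+2) else t) • (bt (m+2) j ∘ Equiv.swap 0 1) k := by
  have hj2 : 2 ≤ (j:ℕ) := by
    have h0 : (j:ℕ) ≠ 0 := fun h => hj0 (Fin.ext h)
    have h1 : (j:ℕ) ≠ 1 := fun h => hj1 (Fin.ext h)
    omega
  have h10 : (1 : Fin (m+2+1)) ≠ 0 := by simp [Fin.ext_iff]
  have h10' : (1 : Fin (m+2)) ≠ 0 := by simp [Fin.ext_iff]
  funext k
  simp only [bt, Function.comp_apply]
  rw [L3_single]
  rcases eq_or_ne k 0 with rfl | hk0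
  · rw [Equiv.swap_apply_left,
      sA j 0 0 (by simp only [Fin.val_zero]; split_ifs <;> simp_all <;> omega),
      sA j 1 1 (by simp only [Fin.val_one]; split_ifs <;> simp_all <;> omega),
      if_pos rfl, if_pos rfl]
  rcases eq_or_ne k 1 with rfl | hk1
  · rw [Equiv.swap_apply_right,
      sA j 1 1 (by simp only [Fin.val_one]; split_ifs <;> simp_all <;> omega),
      sA j 0 0 (by simp only [Fin.val_zero]; split_ifs <;> simp_all <;> omega),
      if_neg h10, if_pos rfl, if_neg h10']
  · have h0v : (k:ℕ) ≠ 0 := fun h => hk0 (Fin.ext h)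
    have h1v : (k:ℕ) ≠ 1 := fun h => hk1 (Fin.ext h)
    rw [Equiv.swap_apply_of_ne_of_ne hk0 hk1,
      if_neg (sA_ne j k 0 (by simp only [Fin.val_zero]; split_ifs <;> omega)),
      if_neg (sA_ne j k 1 (by simp only [Fin.val_one]; split_ifs <;> omega)),
      if_neg hk0]

lemma alt_smul_univ {n : ℕ} (f : AlternatingMap ℂ (nV n) (nV n) (Fin n))
    (c : Fin n → ℂ) (v : Fin n → nV n) :
    f (fun i => c i • v i) = (∏ i, c i) • f v :=
  f.toMultilinearMap.map_smul_univ c v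

lemma prod_ite (m : ℕ) (t : ℂ) :
    (∏ k : Fin (m+2), (if k = 0 then t^(m+2) else t)) = t^(2*m+3) := by
  rw [Fin.prod_univ_succ]
  simp [Finset.prod_const, Fin.succ_ne_zero]
  ring

/-- For every integer `n ≥ 2` and every `α ∈ ℂ`, the algebra `C₂(α)`
degenerates to `B`. -/
theorem C2_degenerates_to_B (n : ℕ) (hn : 2 ≤ n) (α : ℂ)
    (μ ν : AlternatingMap ℂ (nV n) (nV n) (Fin n)) (hμ : IsC2 n α μ) (hν : IsB n ν) :
    ⇑ν ∈ closure (glOrbit n ⇑μ) := by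
  obtain ⟨m, rfl⟩ : ∃ m, n = m + 2 := ⟨n - 2, by omega⟩
  clear hn
  set S : nV (m+2) →ₗ[ℂ] nV (m+2) := L3 (m+2) 1 1 1 with hS
  set ρ : AlternatingMap ℂ (nV (m+2)) (nV (m+2)) (Fin (m+2)) := ν.compLinearMap S with hρ
  set σ : AlternatingMap ℂ (nV (m+2)) (nV (m+2)) (Fin (m+2)) := S.compAlternatingMap ρ with hσ
  have h10 : (1 : Fin (m+2+1)) ≠ 0 := by simp [Fin.ext_iff]
  have h01' : (0 : Fin (m+2)) ≠ 1 := by simp [Fin.ext_iff]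
  -- values of ρ and σ
  have hSbt0 : (fun k => S (bt (m+2) 0 k)) = bt (m+2) 1 := by
    have := key0 m 1; simpa using this
  have hSbt1 : (fun k => S (bt (m+2) 1 k)) = bt (m+2) 0 := by
    have := key1 m 1; simp only [one_pow, ite_self, one_smul] at this; exact this
  have hSbtj : ∀ j : Fin (m+2+1), j ≠ 0 → j ≠ 1 →
      (fun k => S (bt (m+2) j k)) = bt (m+2) j ∘ Equiv.swap 0 1 := by
    intro j hj0 hj1
    have := key2 m 1 j hj0 hj1; simp only [one_pow, ite_self, one_smul] at this; exact this
  have hρ0 : ρ (bt (m+2) 0) = 0 := by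
    rw [hρ, AlternatingMap.compLinearMap_apply]
    rw [show (fun k => S (bt (m+2) 0 k)) = bt (m+2) 1 from hSbt0]
    exact hν.2 1 h10
  have hρ1 : ρ (bt (m+2) 1) = sb (m+2) 0 := by
    rw [hρ, AlternatingMap.compLinearMap_apply]
    rw [show (fun k => S (bt (m+2) 1 k)) = bt (m+2) 0 from hSbt1]
    exact hν.1
  have hρj : ∀ j : Fin (m+2+1), j ≠ 0 → j ≠ 1 → ρ (bt (m+2) j) = 0 := by
    intro j hj0 hj1
    rw [hρ, AlternatingMap.compLinearMap_apply]
    rw [show (fun k => S (bt (m+2) j k)) = bt (m+2) j ∘ Equiv.swap 0 1 from hSbtj j hj0 hj1]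
    rw [ν.map_swap _ h01', hν.2 j hj0, neg_zero]
  have hS0 : S (sb (m+2) 0) = sb (m+2) 1 := by rw [hS, L3_single]; simp
  -- the family of structures
  set T : ℕ → ℂ := fun k => ((1 / (k+1) : ℝ) : ℂ) with hT
  have hTne : ∀ k, T k ≠ 0 := by
    intro k
    simp only [hT, one_div, ne_eq, Complex.ofReal_eq_zero, inv_eq_zero]
    positivity
  have hT0 : Filter.Tendsto T Filter.atTop (nhds 0) := by
    rw [hT]
    have h1 : Filter.Tendsto (fun k : ℕ => (1 / (k+1) : ℝ)) Filter.atTop (nhds 0) :=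
      tendsto_one_div_add_atTop_nhds_zero_nat
    have h2 := (Complex.continuous_ofReal.tendsto 0).comp h1
    have : (0:ℂ) = ((0:ℝ):ℂ) := by simp
    rw [this]
    exact h2
  -- main algebraic identity
  have main : ∀ (t : ℂ) (ht : t ≠ 0),
      glAct (m+2) (Geq m t ht) ⇑μ =
        ⇑(ν + t^(m+1) • ρ + (α * t^(2*m+2)) • σ) := by
    intro t ht
    have habs : glAct (m+2) (Geq m t ht) ⇑μ =
        ⇑((Geq m t ht).toLinearMap.compAlternatingMap
          (μ.compLinearMap (L3 (m+2) t (t^(m+2)) t))) := by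
      funext x
      simp only [glAct, LinearMap.compAlternatingMap_apply, AlternatingMap.compLinearMap_apply,
        LinearEquiv.coe_coe, Geq, LinearEquiv.ofLinear_symm_apply, LinearEquiv.ofLinear_apply]
    rw [habs]
    refine congrArg _ (my_alt_ext fun j => ?_)
    rw [LinearMap.compAlternatingMap_apply, AlternatingMap.compLinearMap_apply]
    rcases eq_or_ne j 0 with rfl | hj0
    · rw [show (fun k => L3 (m+2) t (t^(m+2)) t (bt (m+2) 0 k))
          = fun k => t • bt (m+2) 1 k from key0 m t]
      rw [alt_smul_univ, hμ.2.1]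
      simp only [Finset.prod_const, Finset.card_univ, Fintype.card_fin]
      rw [map_smul]
      simp only [LinearEquiv.coe_coe]
      have : (Geq m t ht) (sb (m+2) 1) = (t⁻¹^(m+2)) • sb (m+2) 0 := by
        show (L3 (m+2) (t⁻¹^(m+2)) t⁻¹ t⁻¹) (sb (m+2) 1) = _
        rw [L3_single]; simp [h10]
      rw [this, smul_smul]
      have hc : t^(m+2) * t⁻¹^(m+2) = 1 := by rw [← mul_pow, mul_inv_cancel₀ ht, one_pow]
      rw [hc, one_smul]
      simp only [AlternatingMap.add_apply, AlternatingMap.smul_apply]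
      have hσ0 : σ (bt (m+2) 0) = 0 := by
        rw [hσ, LinearMap.compAlternatingMap_apply, hρ0, map_zero]
      rw [hν.1, hρ0, hσ0]
      simp
    rcases eq_or_ne j 1 with rfl | hj1
    · rw [show (fun k => L3 (m+2) t (t^(m+2)) t (bt (m+2) 1 k))
          = fun k => (if k = 0 then t^(m+2) else t) • bt (m+2) 0 k from key1 m t]
      rw [alt_smul_univ, prod_ite, hμ.1]
      rw [map_smul, map_add, map_smul]
      simp only [LinearEquiv.coe_coe]
      have hg0 : (Geq m t ht) (sb (m+2) 0) = t⁻¹ • sb (m+2) 1 := by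
        show (L3 (m+2) (t⁻¹^(m+2)) t⁻¹ t⁻¹) (sb (m+2) 0) = _
        rw [L3_single]; simp
      have hg1 : (Geq m t ht) (sb (m+2) 1) = (t⁻¹^(m+2)) • sb (m+2) 0 := by
        show (L3 (m+2) (t⁻¹^(m+2)) t⁻¹ t⁻¹) (sb (m+2) 1) = _
        rw [L3_single]; simp [h10]
      rw [hg0, hg1]
      simp only [AlternatingMap.add_apply, AlternatingMap.smul_apply]
      have hσ1 : σ (bt (m+2) 1) = sb (m+2) 1 := by
        rw [hσ, LinearMap.compAlternatingMap_apply, hρ1, hS0]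
      rw [hν.2 1 h10, hρ1, hσ1, zero_add]
      simp only [smul_add, smul_smul, ← mul_assoc]
      rw [show t^(2*m+3) * α * t⁻¹ = α * t^(2*m+2) by field_simp; ring,
        show t^(2*m+3) * t⁻¹^(m+2) = t^(m+1) by rw [inv_pow, ← div_eq_mul_inv, div_eq_iff (pow_ne_zero _ ht), ← pow_add]; ring]
      exact add_comm _ _
    · rw [show (fun k => L3 (m+2) t (t^(m+2)) t (bt (m+2) j k))
          = fun k => (if k = 0 then t^(m+2) else t) • (bt (m+2) j ∘ Equiv.swap 0 1) k
          from key2 m t j hj0 hj1]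
      rw [alt_smul_univ, μ.map_swap _ h01', hμ.2.2 j hj0 hj1]
      simp only [neg_zero, smul_zero, map_zero]
      simp only [AlternatingMap.add_apply, AlternatingMap.smul_apply]
      have hσj : σ (bt (m+2) j) = 0 := by
        rw [hσ, LinearMap.compAlternatingMap_apply, hρj j hj0 hj1, map_zero]
      rw [hν.2 j hj0, hρj j hj0 hj1, hσj]
      simp
  -- assemble
  apply mem_closure_of_tendsto (f := fun k =>
    ⇑(ν + (T k)^(m+1) • ρ + (α * (T k)^(2*m+2)) • σ)) (b := Filter.atTop)
  · rw [tendsto_pi_nhds]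
    intro x
    simp only [AlternatingMap.add_apply, AlternatingMap.smul_apply]
    have l1 : Filter.Tendsto (fun k => (T k)^(m+1) • ρ x) Filter.atTop (nhds 0) := by
      have : Filter.Tendsto (fun k => (T k)^(m+1)) Filter.atTop (nhds 0) := by
        have := hT0.pow (m+1)
        simpa [zero_pow] using this
      simpa using this.smul_const (ρ x)
    have l2 : Filter.Tendsto (fun k => (α * (T k)^(2*m+2)) • σ x) Filter.atTop (nhds 0) := by
      have : Filter.Tendsto (fun k => α * (T k)^(2*m+2)) Filter.atTop (nhds 0) := by
        have := (hT0.pow (2*m+2)).const_mul α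
        simpa [zero_pow] using this
      simpa using this.smul_const (σ x)
    have := (tendsto_const_nhds (x := ν x) (f := Filter.atTop (α := ℕ))).add l1 |>.add l2
    simpa using this
  · filter_upwards with k
    exact ⟨Geq m (T k) (hTne k), (main (T k) (hTne k)).symm⟩
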